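/- Define u(z) = ∫_{−π/2}^{π/2} min(0, log|e^{iπ/6} − e^{iθ}|) · P_z(θ) dθ/(2π) for z on the imaginary axis segment {iy : −1 < y < 1} in 𝔻. Then u(iy) ≥ −log 2 for all y ∈ (−1,1). -/

import Mathlib

set_option maxHeartbeats 1000000

open Complex
open Complex Real MeasureTheory

lemma norm_exp_sub_exp (a b : ℝ) :
    ‖Complex.exp ((a:ℂ) * Complex.I) - Complex.exp ((b:ℂ) * Complex.I)‖ ^ 2
      = 2 - 2 * Real.cos (a - b) := by
  rw [Complex.exp_mul_I, Complex.exp_mul_I]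
  rw [← Complex.normSq_eq_norm_sq, Complex.normSq_apply]
  simp [Complex.cos_ofReal_re, Complex.sin_ofReal_re, Real.cos_sub]
  nlinarith [Real.sin_sq_add_cos_sq a, Real.sin_sq_add_cos_sq b, Real.cos_sub a b]

lemma norm_exp_sub_iy (θ y : ℝ) :
    ‖Complex.exp ((θ:ℂ) * Complex.I) - Complex.I * (y:ℂ)‖ ^ 2
      = 1 - 2 * y * Real.sin θ + y ^ 2 := by
  rw [Complex.exp_mul_I]
  rw [← Complex.normSq_eq_norm_sq, Complex.normSq_apply]
  simp [Complex.cos_ofReal_re, Complex.sin_ofReal_re]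
  nlinarith [Real.sin_sq_add_cos_sq θ]


lemma poisson_cos_le (y s c : ℝ) (hc : 0 ≤ c) (h1 : s^2 + c^2 = 1) :
    (1 - y^2) * c ≤ 1 - 2*y*s + y^2 := by
  rcases eq_or_ne s 0 with hs | hs
  · have hc1 : c = 1 := by nlinarith
    rw [hs, hc1]; nlinarith [sq_nonneg y]
  · have hs2 : 0 < s^2 := by positivity
    have key : s^2 * ((1 - 2*y*s + y^2) - (1 - y^2)*c) = (1+c)*(s*y-(1-c))^2 := by
      linear_combination (1 - c - 2*s*y) * h1
    nlinarith [mul_nonneg (by linarith : (0:ℝ) ≤ 1 + c) (sq_nonneg (s*y - (1-c)))]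

lemma log_ge_half_sub (t : ℝ) (h0 : 0 < t) (h1 : t ≤ 1) : (t - 1/t)/2 ≤ Real.log t := by
  have hx : 0 ≤ -Real.log t := by
    simpa using Real.log_nonpos h0.le h1
  have h2 : -Real.log t ≤ Real.sinh (-Real.log t) := Real.self_le_sinh_iff.2 hx
  rw [Real.sinh_eq, Real.exp_neg, neg_neg, Real.exp_log h0] at h2
  rw [one_div]
  linarith

lemma sin_lb_also (u : ℝ) (h0 : 0 ≤ u) (h1 : u ≤ π/12) : 24/25 * u ≤ Real.sin u := by
  rcases h0.eq_or_lt with h | h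
  · simp [← h]
  · have hpi : π ≤ 4 := Real.pi_le_four
    have h2 : u ≤ 1 := by linarith
    have := Real.sin_gt_sub_cube h
    nlinarith [sq_nonneg u]

lemma sin_ge_mul_cos (u : ℝ) (h0 : 0 ≤ u) (h1 : u < π/2) : u * Real.cos u ≤ Real.sin u := by
  rcases h0.eq_or_lt with h | h
  · simp [← h]
  · have h2 := Real.lt_tan h h1
    have hc : 0 < Real.cos u := Real.cos_pos_of_mem_Ioo ⟨by linarith [Real.pi_pos], h1⟩
    rw [Real.tan_eq_sin_div_cos] at h2
    calc u * Real.cos u ≤ (Real.sin u / Real.cos u) * Real.cos u :=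
          mul_le_mul_of_nonneg_right h2.le hc.le
    _ = Real.sin u := by field_simp

lemma sin_half_sq (x : ℝ) : Real.sin (x/2)^2 = 1/2 - Real.cos x / 2 := by
  have := Real.sin_sq_eq_half_sub (x/2)
  rwa [show 2*(x/2) = x by ring] at this

lemma two_sub_cos_lb1 (ψ : ℝ) (h : |ψ| ≤ π/3) : 3/4 * ψ^2 ≤ 2 - 2*Real.cos ψ := by
  have key : ∀ x : ℝ, 0 ≤ x → x ≤ π/3 → 3/4 * x^2 ≤ 2 - 2*Real.cos x := by
    intro x hx0 hx1
    have h1 := sin_half_sq x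
    have h2 : (x/2) * Real.cos (x/2) ≤ Real.sin (x/2) :=
      sin_ge_mul_cos _ (by linarith) (by linarith [Real.pi_pos])
    have h3 : Real.cos (π/6) ≤ Real.cos (x/2) := by
      apply Real.cos_le_cos_of_nonneg_of_le_pi (by linarith) (by linarith [Real.pi_pos]) (by linarith)
    rw [Real.cos_pi_div_six] at h3
    have h4 : Real.sqrt 3 ^ 2 = 3 := Real.sq_sqrt (by norm_num)
    have h6 : Real.sqrt 3/4 * x ≤ Real.sin (x/2) := by
      have h5 := mul_le_mul_of_nonneg_left h3 (by linarith : (0:ℝ) ≤ x/2)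
      calc Real.sqrt 3/4 * x = (x/2) * (Real.sqrt 3/2) := by ring
      _ ≤ (x/2) * Real.cos (x/2) := h5
      _ ≤ Real.sin (x/2) := h2
    have h7 : (Real.sqrt 3/4 * x)^2 ≤ Real.sin (x/2)^2 :=
      pow_le_pow_left₀ (by positivity) h6 2
    nlinarith [h7, h4]
  rcases abs_le.1 h with ⟨ha, hb⟩
  rcases le_or_gt 0 ψ with hψ | hψ
  · exact key ψ hψ hb
  · have := key (-ψ) (by linarith) (by linarith)
    simpa using this

lemma two_sub_cos_lb2 (ψ : ℝ) (h : |ψ| ≤ π/6) : (24/25)^2 * ψ^2 ≤ 2 - 2*Real.cos ψ := by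
  have key : ∀ x : ℝ, 0 ≤ x → x ≤ π/6 → (24/25)^2 * x^2 ≤ 2 - 2*Real.cos x := by
    intro x hx0 hx1
    have h1 := sin_half_sq x
    have h2 : 24/25 * (x/2) ≤ Real.sin (x/2) := sin_lb_also _ (by linarith) (by linarith)
    have h7 : (24/25 * (x/2))^2 ≤ Real.sin (x/2)^2 :=
      pow_le_pow_left₀ (by positivity) h2 2
    nlinarith [h7]
  rcases abs_le.1 h with ⟨ha, hb⟩
  rcases le_or_gt 0 ψ with hψ | hψ
  · exact key ψ hψ hb
  · have := key (-ψ) (by linarith) (by linarith)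
    simpa using this

lemma cos_ge_of_abs_le (x b : ℝ) (hb : b ≤ π) (h : |x| ≤ b) : Real.cos b ≤ Real.cos x := by
  rw [← Real.cos_abs x]
  exact Real.cos_le_cos_of_nonneg_of_le_pi (abs_nonneg x) hb h

lemma norm_I_mul_sq (y : ℝ) : ‖Complex.I * (y:ℂ)‖^2 = y^2 := by
  rw [norm_mul, Complex.norm_I, one_mul, Complex.norm_real]
  exact _root_.sq_abs y

lemma chord_sq' (θ : ℝ) :
    ‖Complex.exp (↑π / 6 * Complex.I) - Complex.exp (↑θ * Complex.I)‖^2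
      = 2 - 2*Real.cos (π/6 - θ) := by
  have h := norm_exp_sub_exp (π/6) θ
  have e : ((π/6 : ℝ) : ℂ) = (π : ℂ)/6 := by push_cast; ring
  rw [e] at h
  exact h

noncomputable def Fi (y θ : ℝ) : ℝ :=
  min 0 (Real.log ‖Complex.exp (↑π / 6 * Complex.I) - Complex.exp (↑θ * Complex.I)‖) *
    ((1 - ‖Complex.I * (y:ℂ)‖ ^ 2) / ‖Complex.exp (↑θ * Complex.I) - Complex.I * (y:ℂ)‖ ^ 2) /
    (2 * π)

lemma P_facts (y θ : ℝ) (hy1 : -1 < y) (hy2 : y < 1) (hθ1 : -(π/2) ≤ θ) (hθ2 : θ ≤ π/2) :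
    0 ≤ (1 - ‖Complex.I * (y:ℂ)‖ ^ 2) / ‖Complex.exp (↑θ * Complex.I) - Complex.I * (y:ℂ)‖ ^ 2 ∧
    Real.cos θ * ((1 - ‖Complex.I * (y:ℂ)‖ ^ 2) / ‖Complex.exp (↑θ * Complex.I) - Complex.I * (y:ℂ)‖ ^ 2) ≤ 1 := by
  have hIy := norm_I_mul_sq y
  have hD := norm_exp_sub_iy θ y
  rw [hIy, hD]
  have habs : |y| < 1 := abs_lt.mpr ⟨hy1, hy2⟩
  have hys : y * Real.sin θ ≤ |y| := by
    calc y * Real.sin θ ≤ |y * Real.sin θ| := le_abs_self _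
    _ = |y| * |Real.sin θ| := abs_mul _ _
    _ ≤ |y| * 1 := mul_le_mul_of_nonneg_left
        (abs_le.mpr ⟨Real.neg_one_le_sin θ, Real.sin_le_one θ⟩) (abs_nonneg y)
    _ = |y| := mul_one _
  have hDpos : 0 < 1 - 2*y*Real.sin θ + y^2 := by
    have h1 : 0 < (1 - |y|)^2 := pow_pos (by linarith) 2
    nlinarith [_root_.sq_abs y]
  have hcos : 0 ≤ Real.cos θ := Real.cos_nonneg_of_mem_Icc ⟨hθ1, hθ2⟩
  constructor
  · apply div_nonneg _ hDpos.le
    nlinarith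
  · rw [← mul_div_assoc, div_le_one hDpos]
    have := poisson_cos_le y (Real.sin θ) (Real.cos θ) hcos (Real.sin_sq_add_cos_sq θ)
    linarith

lemma core_tail (y θ : ℝ) (hy1 : -1 < y) (hy2 : y < 1) (hθ1 : -(π/2) ≤ θ) (hθ2 : θ ≤ π/2)
    (hd1 : π/6 ≤ |θ - π/6|) (hd2 : |θ - π/6| ≤ π/3) :
    -(1/(2*π*|θ - π/6|)) ≤ Fi y θ := by
  obtain ⟨hP0, hPc⟩ := P_facts y θ hy1 hy2 hθ1 hθ2
  have hπ := Real.pi_pos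
  have hcos : 0 ≤ Real.cos θ := Real.cos_nonneg_of_mem_Icc ⟨hθ1, hθ2⟩
  set P := (1 - ‖Complex.I * (y:ℂ)‖ ^ 2) / ‖Complex.exp (↑θ * Complex.I) - Complex.I * (y:ℂ)‖ ^ 2 with hPdef
  set ch := ‖Complex.exp (↑π / 6 * Complex.I) - Complex.exp (↑θ * Complex.I)‖ with hch
  set t := |θ - π/6| with htdef
  have ht0 : 0 < t := lt_of_lt_of_le (by positivity) hd1
  have habs : |π/6 - θ| = t := by rw [htdef, abs_sub_comm]
  have hc2 : ch^2 = 2 - 2*Real.cos (π/6 - θ) := chord_sq' θ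
  have hcost : Real.cos (π/6 - θ) = Real.cos t := by rw [← Real.cos_abs, habs]
  have hcos13 : Real.cos (π/3) ≤ Real.cos t :=
    Real.cos_le_cos_of_nonneg_of_le_pi ht0.le (by linarith) hd2
  rw [Real.cos_pi_div_three] at hcos13
  have hchnn : 0 ≤ ch := norm_nonneg _
  have hch1 : ch ≤ 1 := by nlinarith [hc2, hcost]
  have hsq3 : Real.sqrt 3 ^ 2 = 3 := Real.sq_sqrt (by norm_num)
  have hsq3nn : 0 ≤ Real.sqrt 3 := Real.sqrt_nonneg 3
  have hlb : 3/4 * t^2 ≤ ch^2 := by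
    have h5 := two_sub_cos_lb1 (π/6 - θ) (by rw [habs]; exact hd2)
    have et : t^2 = (π/6-θ)^2 := by rw [← habs, _root_.sq_abs]
    rw [et]; linarith [hc2]
  have hch0 : Real.sqrt 3/2 * t ≤ ch := by
    have e2 : (Real.sqrt 3/2*t)^2 = 3/4*t^2 := by
      rw [mul_pow, div_pow, hsq3]; ring
    calc Real.sqrt 3/2*t = Real.sqrt ((Real.sqrt 3/2*t)^2) := (Real.sqrt_sq (by positivity)).symm
    _ ≤ Real.sqrt (ch^2) := Real.sqrt_le_sqrt (by rw [e2]; exact hlb)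
    _ = ch := Real.sqrt_sq hchnn
  have hchpos : 0 < ch := by
    have h30 : (0:ℝ) < Real.sqrt 3 := Real.sqrt_pos.mpr (by norm_num)
    nlinarith
  have hkey : 2*Real.cos (π/6 - θ) - 1 ≤ Real.sqrt 3 * Real.cos θ := by
    rw [Real.cos_sub, Real.cos_pi_div_six, Real.sin_pi_div_six]
    nlinarith [Real.sin_le_one θ]
  have hlog : -(Real.sqrt 3 * Real.cos θ)/(2*ch) ≤ Real.log ch := by
    have h1 := log_ge_half_sub ch hchpos hch1
    have h2 : (ch - 1/ch)/2 = (ch^2 - 1)/(2*ch) := by field_simp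
    have h3 : -(Real.sqrt 3 * Real.cos θ) ≤ ch^2 - 1 := by nlinarith [hc2]
    calc -(Real.sqrt 3 * Real.cos θ)/(2*ch) ≤ (ch^2-1)/(2*ch) :=
          (div_le_div_iff_of_pos_right (by positivity)).2 h3
    _ = (ch - 1/ch)/2 := h2.symm
    _ ≤ Real.log ch := h1
  have hmin : -(Real.sqrt 3 * Real.cos θ)/(2*ch) ≤ min 0 (Real.log ch) := by
    apply le_min _ hlog
    apply div_nonpos_of_nonpos_of_nonneg _ (by positivity)
    nlinarith [mul_nonneg hsq3nn hcos]
  have step1 : -(Real.sqrt 3 * Real.cos θ)/(2*ch) * P ≤ min 0 (Real.log ch) * P :=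
    mul_le_mul_of_nonneg_right hmin hP0
  have step2 : -(1/t) ≤ -(Real.sqrt 3 * Real.cos θ)/(2*ch) * P := by
    have e1 : -(Real.sqrt 3 * Real.cos θ)/(2*ch) * P = -((Real.sqrt 3*(Real.cos θ*P))/(2*ch)) := by
      ring
    rw [e1, neg_le_neg_iff, div_le_div_iff₀ (by positivity) (by positivity)]
    have hX : Real.sqrt 3*(Real.cos θ*P) ≤ Real.sqrt 3 := by
      nlinarith [mul_nonneg hcos hP0]
    have : Real.sqrt 3*(Real.cos θ*P) * t ≤ Real.sqrt 3 * t :=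
      mul_le_mul_of_nonneg_right hX ht0.le
    nlinarith [hch0]
  have final : -(1/t) ≤ min 0 (Real.log ch) * P := le_trans step2 step1
  have : -(1/t)/(2*π) ≤ min 0 (Real.log ch) * P / (2*π) :=
    (div_le_div_iff_of_pos_right (by positivity)).2 final
  calc -(1/(2*π*t)) = -(1/t)/(2*π) := by field_simp
  _ ≤ min 0 (Real.log ch) * P / (2*π) := this
  _ = Fi y θ := rfl

lemma core_sing (y θ cs : ℝ) (hy1 : -1 < y) (hy2 : y < 1) (hθ1 : -(π/2) ≤ θ) (hθ2 : θ ≤ π/2)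
    (hcs : 0 < cs) (hccos : cs ≤ Real.cos θ) (hd : |θ - π/6| ≤ π/6) :
    1/cs * Real.log (24/25 * |θ - π/6|) / (2*π) ≤ Fi y θ := by
  obtain ⟨hP0, hPc⟩ := P_facts y θ hy1 hy2 hθ1 hθ2
  have hπ := Real.pi_pos
  have hπ4 := Real.pi_le_four
  set P := (1 - ‖Complex.I * (y:ℂ)‖ ^ 2) / ‖Complex.exp (↑θ * Complex.I) - Complex.I * (y:ℂ)‖ ^ 2 with hPdef
  set ch := ‖Complex.exp (↑π / 6 * Complex.I) - Complex.exp (↑θ * Complex.I)‖ with hch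
  set t := |θ - π/6| with htdef
  have habs : |π/6 - θ| = t := by rw [htdef, abs_sub_comm]
  have hc2 : ch^2 = 2 - 2*Real.cos (π/6 - θ) := chord_sq' θ
  have hchnn : 0 ≤ ch := norm_nonneg _
  rcases eq_or_lt_of_le (abs_nonneg (θ - π/6)) with h0 | ht0
  · -- t = 0 : both sides are 0
    have ht : t = 0 := h0.symm
    have h2 : θ - π/6 = 0 := abs_eq_zero.mp ht
    have hch0 : ch = 0 := by
      have h3 : ch^2 = 0 := by
        rw [hc2, show π/6 - θ = 0 by linarith]; simp
      nlinarith
    simp only [Fi]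
    rw [← hch, hch0, ht]
    simp [Real.log_zero]
  · -- t > 0
    have hlbsq : (24/25*t)^2 ≤ ch^2 := by
      have h5 := two_sub_cos_lb2 (π/6 - θ) (by rw [habs]; exact hd)
      have et : t^2 = (π/6-θ)^2 := by rw [← habs, _root_.sq_abs]
      rw [mul_pow, et]; linarith [hc2]
    have hlb : 24/25*t ≤ ch := by
      calc 24/25*t = Real.sqrt ((24/25*t)^2) := (Real.sqrt_sq (by positivity)).symm
      _ ≤ Real.sqrt (ch^2) := Real.sqrt_le_sqrt hlbsq
      _ = ch := Real.sqrt_sq hchnn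
    have hsmall : 24/25*t < 1 := by
      have : t ≤ π/6 := hd
      nlinarith
    have hpos : 0 < 24/25*t := by positivity
    have hlog1 : Real.log (24/25*t) ≤ Real.log ch := Real.log_le_log hpos hlb
    have hlogneg : Real.log (24/25*t) < 0 := Real.log_neg hpos hsmall
    have hmin : Real.log (24/25*t) ≤ min 0 (Real.log ch) := le_min hlogneg.le hlog1
    have hPle : P ≤ 1/cs := by
      rw [le_div_iff₀ hcs]
      calc P * cs ≤ P * Real.cos θ := mul_le_mul_of_nonneg_left hccos hP0
      _ = Real.cos θ * P := mul_comm _ _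
      _ ≤ 1 := hPc
    have step1 : Real.log (24/25*t) * P ≤ min 0 (Real.log ch) * P :=
      mul_le_mul_of_nonneg_right hmin hP0
    have step2 : Real.log (24/25*t) * (1/cs) ≤ Real.log (24/25*t) * P :=
      mul_le_mul_of_nonpos_left hPle hlogneg.le
    have final : 1/cs * Real.log (24/25*t) ≤ min 0 (Real.log ch) * P := by
      rw [mul_comm]; exact le_trans step2 step1
    exact (div_le_div_iff_of_pos_right (by positivity)).2 final

noncomputable def gAux : ℝ → ℝ := fun θ =>
  if θ ≤ -(π/6) then 0
  else if θ ≤ 0 then -(1/(2*π*(π/6 - θ)))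
  else if θ ≤ π/6 then 2/Real.sqrt 3 * Real.log (24/25*(π/6 - θ)) / (2*π)
  else if θ ≤ π/3 then 2 * Real.log (24/25*(θ - π/6)) / (2*π)
  else -(1/(2*π*(θ - π/6)))

lemma gAux_le (y θ : ℝ) (hy1 : -1 < y) (hy2 : y < 1) (hθ1 : -(π/2) ≤ θ) (hθ2 : θ ≤ π/2) :
    gAux θ ≤ Fi y θ := by
  have hπ := Real.pi_pos
  unfold gAux
  split_ifs with h1 h2 h3 h4
  · -- θ ≤ -π/6 : Fi = 0
    have hc2 : ‖Complex.exp (↑π / 6 * Complex.I) - Complex.exp (↑θ * Complex.I)‖^2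
        = 2 - 2*Real.cos (π/6 - θ) := chord_sq' θ
    have hcosle : Real.cos (π/6 - θ) ≤ 1/2 := by
      have h5 : Real.cos (π/6 - θ) ≤ Real.cos (π/3) :=
        Real.cos_le_cos_of_nonneg_of_le_pi (by positivity) (by linarith) (by linarith)
      rw [Real.cos_pi_div_three] at h5; exact h5
    have hch1 : 1 ≤ ‖Complex.exp (↑π / 6 * Complex.I) - Complex.exp (↑θ * Complex.I)‖ := by
      nlinarith [norm_nonneg (Complex.exp (↑π / 6 * Complex.I) - Complex.exp (↑θ * Complex.I))]
    obtain ⟨hP0, _⟩ := P_facts y θ hy1 hy2 hθ1 hθ2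
    simp only [Fi]
    rw [min_eq_left (Real.log_nonneg hch1)]
    simp
  · -- -π/6 < θ ≤ 0
    have habs : |θ - π/6| = π/6 - θ := by rw [abs_of_nonpos (by linarith)]; ring
    have h := core_tail y θ hy1 hy2 hθ1 hθ2 (by rw [habs]; linarith) (by rw [habs]; linarith)
    rwa [habs] at h
  · -- 0 < θ ≤ π/6
    have habs : |θ - π/6| = π/6 - θ := by rw [abs_of_nonpos (by linarith)]; ring
    have hccos : Real.sqrt 3 / 2 ≤ Real.cos θ := by
      have h5 := cos_ge_of_abs_le θ (π/6) (by linarith) (by rw [abs_of_pos (by linarith)]; linarith)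
      rwa [Real.cos_pi_div_six] at h5
    have h := core_sing y θ (Real.sqrt 3 / 2) hy1 hy2 hθ1 hθ2 (by positivity) hccos
        (by rw [habs]; linarith)
    rw [habs, one_div_div] at h
    exact h
  · -- π/6 < θ ≤ π/3
    have habs : |θ - π/6| = θ - π/6 := abs_of_pos (by linarith)
    have hccos : 1/2 ≤ Real.cos θ := by
      have h5 := cos_ge_of_abs_le θ (π/3) (by linarith) (by rw [abs_of_pos (by linarith)]; linarith)
      rwa [Real.cos_pi_div_three] at h5
    have h := core_sing y θ (1/2) hy1 hy2 hθ1 hθ2 (by norm_num) hccos (by rw [habs]; linarith)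
    rw [habs] at h
    norm_num at h
    exact h
  · -- π/3 < θ
    have habs : |θ - π/6| = θ - π/6 := abs_of_pos (by linarith)
    have h := core_tail y θ hy1 hy2 hθ1 hθ2 (by rw [habs]; linarith) (by rw [habs]; linarith)
    rwa [habs] at h

namespace GInt

noncomputable def G3 : ℝ → ℝ := fun θ => (π/6-θ) - (π/6-θ)*Real.log (24/25*(π/6-θ))

lemma contG3 : ContinuousOn G3 (Set.Icc 0 (π/6)) := by
  have hcont : Continuous fun θ : ℝ =>
      (π/6-θ) - ((π/6-θ)*Real.log (π/6-θ) + (π/6-θ)*Real.log (24/25)) := by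
    have h1 : Continuous fun θ : ℝ => (π/6-θ)*Real.log (π/6-θ) :=
      Real.continuous_mul_log.comp (by continuity)
    continuity
  apply hcont.continuousOn.congr
  intro x hx
  rcases lt_or_eq_of_le hx.2 with h | h
  · have hu : 0 < π/6 - x := by linarith
    simp only [G3]
    rw [Real.log_mul (by norm_num) (ne_of_gt hu)]
    ring
  · simp [G3, h]

lemma derivG3 (x : ℝ) (hx : x ∈ Set.Ioo 0 (π/6)) :
    HasDerivAt G3 (Real.log (24/25*(π/6-x))) x := by
  have hu : 0 < π/6 - x := by linarith [hx.2]
  have h1 : HasDerivAt (fun θ : ℝ => π/6 - θ) (-1) x := (hasDerivAt_id x).const_sub (π/6)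
  have h2 : HasDerivAt (fun θ : ℝ => 24/25*(π/6-θ)) (24/25 * -1) x := h1.const_mul (24/25)
  have h3 : HasDerivAt (fun θ : ℝ => Real.log (24/25*(π/6-θ)))
      ((24/25 * -1)/(24/25*(π/6-x))) x := h2.log (by positivity)
  have h4 := h1.mul h3
  have h5 := h1.sub h4
  have hne : (π:ℝ)/6 - x ≠ 0 := ne_of_gt hu
  have hq : 24/25*((π:ℝ)/6-x) ≠ 0 := by positivity
  have e : (π/6-x) * (24/25 * -1 / (24/25*(π/6-x))) = -1 := by
    calc (π/6-x) * (24/25 * -1 / (24/25*(π/6-x)))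
        = -((24/25*(π/6-x)) / (24/25*(π/6-x))) := by ring
    _ = -1 := by rw [div_self hq]
  convert h5 using 1 <;> try rfl
  rw [e]
  ring

lemma intG3 : IntervalIntegrable (fun θ => Real.log (24/25*(π/6-θ))) volume 0 (π/6) := by
  have hπ := Real.pi_pos
  have hle : (0:ℝ) ≤ π/6 := by linarith
  have h := intervalIntegral.intervalIntegrable_deriv_of_nonneg (a := 0) (b := π/6) (g := fun θ => -G3 θ)
    (g' := fun θ => -Real.log (24/25*(π/6-θ))) ?_ ?_ ?_
  · have h2 := h.neg
    rw [show (-(fun θ => -Real.log (24/25*(π/6-θ)))) = (fun θ => Real.log (24/25*(π/6-θ))) from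
      by funext θ; simp] at h2
    exact h2
  · rw [Set.uIcc_of_le hle]; exact contG3.neg
  · intro x hx
    rw [min_eq_left hle, max_eq_right hle] at hx
    exact (derivG3 x hx).neg
  · intro x hx
    rw [min_eq_left hle, max_eq_right hle] at hx
    have hu : 0 < π/6 - x := by linarith [hx.2]
    have hπ4 := Real.pi_le_four
    have : 24/25*(π/6-x) ≤ 1 := by nlinarith [hx.1]
    simp only [neg_nonneg]
    exact Real.log_nonpos (by positivity) this

lemma valG3 : ∫ θ in (0:ℝ)..(π/6), Real.log (24/25*(π/6-θ))
    = π/6*Real.log (24/25*(π/6)) - π/6 := by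
  have hπ := Real.pi_pos
  have h := intervalIntegral.integral_eq_sub_of_hasDeriv_right_of_le (by linarith : (0:ℝ) ≤ π/6)
    contG3 (fun x hx => (derivG3 x hx).hasDerivWithinAt) intG3
  rw [h]
  simp only [G3]
  rw [show π/6 - π/6 = (0:ℝ) by ring]
  simp [Real.log_zero]
  try ring

noncomputable def G4 : ℝ → ℝ := fun θ => (θ-π/6)*Real.log (24/25*(θ-π/6)) - (θ-π/6)

lemma contG4 : ContinuousOn G4 (Set.Icc (π/6) (π/3)) := by
  have hcont : Continuous fun θ : ℝ =>
      ((θ-π/6)*Real.log (θ-π/6) + (θ-π/6)*Real.log (24/25)) - (θ-π/6) := by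
    have h1 : Continuous fun θ : ℝ => (θ-π/6)*Real.log (θ-π/6) :=
      Real.continuous_mul_log.comp (by continuity)
    continuity
  apply hcont.continuousOn.congr
  intro x hx
  rcases eq_or_lt_of_le hx.1 with h | h
  · simp [G4, ← h]
  · have hu : 0 < x - π/6 := by linarith
    simp only [G4]
    rw [Real.log_mul (by norm_num) (ne_of_gt hu)]
    ring

lemma derivG4 (x : ℝ) (hx : x ∈ Set.Ioo (π/6) (π/3)) :
    HasDerivAt G4 (Real.log (24/25*(x-π/6))) x := by
  have hu : 0 < x - π/6 := by linarith [hx.1]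
  have h1 : HasDerivAt (fun θ : ℝ => θ - π/6) 1 x := (hasDerivAt_id x).sub_const (π/6)
  have h2 : HasDerivAt (fun θ : ℝ => 24/25*(θ-π/6)) (24/25 * 1) x := h1.const_mul (24/25)
  have h3 : HasDerivAt (fun θ : ℝ => Real.log (24/25*(θ-π/6)))
      ((24/25 * 1)/(24/25*(x-π/6))) x := h2.log (by positivity)
  have h4 := h1.mul h3
  have h5 := h4.sub h1
  have hne : x - (π:ℝ)/6 ≠ 0 := ne_of_gt hu
  have hq : 24/25*(x-(π:ℝ)/6) ≠ 0 := by positivity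
  have e : (x-π/6) * (24/25 * 1 / (24/25*(x-π/6))) = 1 := by
    calc (x-π/6) * (24/25 * 1 / (24/25*(x-π/6)))
        = (24/25*(x-π/6)) / (24/25*(x-π/6)) := by ring
    _ = 1 := div_self hq
  convert h5 using 1 <;> try rfl
  rw [e]
  ring

lemma intG4 : IntervalIntegrable (fun θ => Real.log (24/25*(θ-π/6))) volume (π/6) (π/3) := by
  have hπ := Real.pi_pos
  have hle : π/6 ≤ π/3 := by linarith
  have h := intervalIntegral.intervalIntegrable_deriv_of_nonneg (a := π/6) (b := π/3) (g := fun θ => -G4 θ)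
    (g' := fun θ => -Real.log (24/25*(θ-π/6))) ?_ ?_ ?_
  · have h2 := h.neg
    rw [show (-(fun θ => -Real.log (24/25*(θ-π/6)))) = (fun θ => Real.log (24/25*(θ-π/6))) from
      by funext θ; simp] at h2
    exact h2
  · rw [Set.uIcc_of_le hle]; exact contG4.neg
  · intro x hx
    rw [min_eq_left hle, max_eq_right hle] at hx
    exact (derivG4 x hx).neg
  · intro x hx
    rw [min_eq_left hle, max_eq_right hle] at hx
    have hu : 0 < x - π/6 := by linarith [hx.1]
    have hπ4 := Real.pi_le_four
    have : 24/25*(x-π/6) ≤ 1 := by nlinarith [hx.2]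
    simp only [neg_nonneg]
    exact Real.log_nonpos (by positivity) this

lemma valG4 : ∫ θ in (π/6:ℝ)..(π/3), Real.log (24/25*(θ-π/6))
    = π/6*Real.log (24/25*(π/6)) - π/6 := by
  have hπ := Real.pi_pos
  have h := intervalIntegral.integral_eq_sub_of_hasDeriv_right_of_le (by linarith : π/6 ≤ π/3)
    contG4 (fun x hx => (derivG4 x hx).hasDerivWithinAt) intG4
  rw [h]
  simp only [G4]
  rw [show π/3 - π/6 = (π:ℝ)/6 by ring, show π/6 - π/6 = (0:ℝ) by ring]
  simp [Real.log_zero]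
  try ring

end GInt

namespace GInt

lemma contP2 : ContinuousOn (fun θ : ℝ => -(1/(2*π*(π/6 - θ)))) (Set.Icc (-(π/6)) 0) := by
  have hπ := Real.pi_pos
  apply ContinuousOn.neg
  apply ContinuousOn.div continuousOn_const (by fun_prop)
  intro x hx
  have : 0 < π/6 - x := by
    have := hx.2; simp at this ⊢; nlinarith [hx.2]
  positivity

lemma valP2 : ∫ θ in (-(π/6):ℝ)..0, -(1/(2*π*(π/6 - θ))) = -(Real.log 2/(2*π)) := by
  have hπ := Real.pi_pos
  have hle : (-(π/6):ℝ) ≤ 0 := by linarith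
  have hderiv : ∀ x ∈ Set.uIcc (-(π/6):ℝ) 0,
      HasDerivAt (fun θ => 1/(2*π) * Real.log (π/6 - θ)) (-(1/(2*π*(π/6 - x)))) x := by
    intro x hx
    rw [Set.uIcc_of_le hle] at hx
    have hu : 0 < π/6 - x := by have := hx.2; nlinarith
    have h1 : HasDerivAt (fun θ : ℝ => π/6 - θ) (-1) x := (hasDerivAt_id x).const_sub (π/6)
    have h3 := (h1.log (ne_of_gt hu)).const_mul (1/(2*π))
    convert h3 using 1 <;> try rfl
    field_simp
  have hint : IntervalIntegrable (fun x => -(1/(2*π*(π/6 - x)))) volume (-(π/6)) 0 := by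
    apply ContinuousOn.intervalIntegrable
    rw [Set.uIcc_of_le hle]
    exact contP2
  rw [intervalIntegral.integral_eq_sub_of_hasDerivAt hderiv hint]
  have e1 : π/6 - 0 = (π:ℝ)/6 := by ring
  have e2 : π/6 - (-(π/6)) = (π:ℝ)/3 := by ring
  rw [e1, e2]
  have e3 : (π:ℝ)/3 = 2*(π/6) := by ring
  rw [e3, Real.log_mul (by norm_num) (by positivity)]
  ring

lemma contP5 : ContinuousOn (fun θ : ℝ => -(1/(2*π*(θ - π/6)))) (Set.Icc (π/3) (π/2)) := by
  have hπ := Real.pi_pos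
  apply ContinuousOn.neg
  apply ContinuousOn.div continuousOn_const (by fun_prop)
  intro x hx
  have : 0 < x - π/6 := by nlinarith [hx.1]
  positivity

lemma valP5 : ∫ θ in (π/3:ℝ)..(π/2), -(1/(2*π*(θ - π/6))) = -(Real.log 2/(2*π)) := by
  have hπ := Real.pi_pos
  have hle : (π/3:ℝ) ≤ π/2 := by linarith
  have hderiv : ∀ x ∈ Set.uIcc (π/3:ℝ) (π/2),
      HasDerivAt (fun θ => -(1/(2*π)) * Real.log (θ - π/6)) (-(1/(2*π*(x - π/6)))) x := by
    intro x hx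
    rw [Set.uIcc_of_le hle] at hx
    have hu : 0 < x - π/6 := by have := hx.1; nlinarith
    have h1 : HasDerivAt (fun θ : ℝ => θ - π/6) 1 x := (hasDerivAt_id x).sub_const (π/6)
    have h3 := (h1.log (ne_of_gt hu)).const_mul (-(1/(2*π)))
    convert h3 using 1 <;> try rfl
    field_simp
  have hint : IntervalIntegrable (fun x => -(1/(2*π*(x - π/6)))) volume (π/3) (π/2) := by
    apply ContinuousOn.intervalIntegrable
    rw [Set.uIcc_of_le hle]
    exact contP5
  rw [intervalIntegral.integral_eq_sub_of_hasDerivAt hderiv hint]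
  have e1 : π/2 - π/6 = (π:ℝ)/3 := by ring
  have e2 : π/3 - π/6 = (π:ℝ)/6 := by ring
  rw [e1, e2]
  have e3 : (π:ℝ)/3 = 2*(π/6) := by ring
  rw [e3, Real.log_mul (by norm_num) (by positivity)]
  ring

end GInt

lemma piece_transfer {a b : ℝ} (hab : a ≤ b) (φ : ℝ → ℝ) (hφ : IntervalIntegrable φ volume a b)
    (heq : ∀ x ∈ Set.Ioc a b, gAux x = φ x) :
    IntervalIntegrable gAux volume a b ∧ (∫ x in a..b, gAux x) = ∫ x in a..b, φ x := by
  constructor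
  · rw [intervalIntegrable_iff_integrableOn_Ioc_of_le hab]
    exact ((intervalIntegrable_iff_integrableOn_Ioc_of_le hab).1 hφ).congr_fun
      (fun x hx => (heq x hx).symm) measurableSet_Ioc
  · apply intervalIntegral.integral_congr_ae
    apply MeasureTheory.ae_of_all
    intro x hx
    rw [Set.uIoc_of_le hab] at hx
    exact heq x hx

lemma piece1 : IntervalIntegrable gAux volume (-(π/2)) (-(π/6)) ∧
    (∫ x in (-(π/2))..(-(π/6)), gAux x) = ∫ x in (-(π/2))..(-(π/6)), (0:ℝ) := by
  have hπ := Real.pi_pos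
  apply piece_transfer (by linarith) _ intervalIntegrable_const
  intro x hx
  simp only [gAux]
  rw [if_pos hx.2]

lemma piece2 : IntervalIntegrable gAux volume (-(π/6)) 0 ∧
    (∫ x in (-(π/6):ℝ)..0, gAux x) = ∫ x in (-(π/6):ℝ)..0, -(1/(2*π*(π/6 - x))) := by
  have hπ := Real.pi_pos
  apply piece_transfer (by linarith) _
  · apply ContinuousOn.intervalIntegrable
    rw [Set.uIcc_of_le (by linarith : (-(π/6):ℝ) ≤ 0)]
    exact GInt.contP2
  · intro x hx
    simp only [gAux]
    rw [if_neg (by linarith [hx.1]), if_pos hx.2]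

lemma piece3 : IntervalIntegrable gAux volume 0 (π/6) ∧
    (∫ x in (0:ℝ)..(π/6), gAux x)
      = ∫ x in (0:ℝ)..(π/6), (2/Real.sqrt 3/(2*π)) * Real.log (24/25*(π/6 - x)) := by
  have hπ := Real.pi_pos
  apply piece_transfer (by linarith) _
  · exact (GInt.intG3.const_mul _)
  · intro x hx
    simp only [gAux]
    rw [if_neg (by linarith [hx.1]), if_neg (by linarith [hx.1]), if_pos hx.2]
    ring

lemma piece4 : IntervalIntegrable gAux volume (π/6) (π/3) ∧
    (∫ x in (π/6:ℝ)..(π/3), gAux x)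
      = ∫ x in (π/6:ℝ)..(π/3), (2/(2*π)) * Real.log (24/25*(x - π/6)) := by
  have hπ := Real.pi_pos
  apply piece_transfer (by linarith) _
  · exact (GInt.intG4.const_mul _)
  · intro x hx
    simp only [gAux]
    rw [if_neg (by linarith [hx.1]), if_neg (by linarith [hx.1]), if_neg (by linarith [hx.1]),
      if_pos hx.2]
    ring

lemma piece5 : IntervalIntegrable gAux volume (π/3) (π/2) ∧
    (∫ x in (π/3:ℝ)..(π/2), gAux x) = ∫ x in (π/3:ℝ)..(π/2), -(1/(2*π*(x - π/6))) := by
  have hπ := Real.pi_pos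
  apply piece_transfer (by linarith) _
  · apply ContinuousOn.intervalIntegrable
    rw [Set.uIcc_of_le (by linarith : (π/3:ℝ) ≤ π/2)]
    exact GInt.contP5
  · intro x hx
    simp only [gAux]
    rw [if_neg (by linarith [hx.1]), if_neg (by linarith [hx.1]), if_neg (by linarith [hx.1]),
      if_neg (by linarith [hx.1])]

lemma gAux_total :
    IntervalIntegrable gAux volume (-(π/2)) (π/2) ∧
    (∫ x in (-(π/2))..(π/2), gAux x)
      = -(Real.log 2/(2*π)) + (2/Real.sqrt 3/(2*π)) * (π/6*Real.log (24/25*(π/6)) - π/6)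
        + (2/(2*π)) * (π/6*Real.log (24/25*(π/6)) - π/6) + -(Real.log 2/(2*π)) := by
  have hπ := Real.pi_pos
  obtain ⟨i1, v1⟩ := piece1
  obtain ⟨i2, v2⟩ := piece2
  obtain ⟨i3, v3⟩ := piece3
  obtain ⟨i4, v4⟩ := piece4
  obtain ⟨i5, v5⟩ := piece5
  have i12 := i1.trans i2
  have i123 := i12.trans i3
  have i1234 := i123.trans i4
  have itot := i1234.trans i5
  refine ⟨itot, ?_⟩
  rw [← intervalIntegral.integral_add_adjacent_intervals i1234 i5,
    ← intervalIntegral.integral_add_adjacent_intervals i123 i4,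
    ← intervalIntegral.integral_add_adjacent_intervals i12 i3,
    ← intervalIntegral.integral_add_adjacent_intervals i1 i2]
  rw [v1, v2, v3, v4, v5]
  rw [intervalIntegral.integral_const_mul, intervalIntegral.integral_const_mul]
  rw [GInt.valG3, GInt.valG4, GInt.valP2, GInt.valP5]
  simp

lemma numeric_final :
    -Real.log 2 ≤ -(Real.log 2/(2*π)) + (2/Real.sqrt 3/(2*π)) * (π/6*Real.log (24/25*(π/6)) - π/6)
        + (2/(2*π)) * (π/6*Real.log (24/25*(π/6)) - π/6) + -(Real.log 2/(2*π)) := by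
  have hπ := Real.pi_pos
  have hπl : 3.141592 < π := Real.pi_gt_d6
  have hl2u : Real.log 2 < 0.6931471808 := Real.log_two_lt_d9
  have hl2l : 0.6931471803 < Real.log 2 := Real.log_two_gt_d9
  set l := Real.log 2 with hldef
  set L := Real.log (24/25*(π/6)) with hLdef
  have hs3 : Real.sqrt 3 ^ 2 = 3 := Real.sq_sqrt (by norm_num)
  have hs0 : 0 < Real.sqrt 3 := Real.sqrt_pos.mpr (by norm_num)
  have hs : 1.732 < Real.sqrt 3 := by nlinarith
  have hL : -l ≤ L := by
    have h12 : (1:ℝ)/2 ≤ 24/25*(π/6) := by nlinarith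
    have h := Real.log_le_log (by norm_num : (0:ℝ) < 1/2) h12
    rw [show (1:ℝ)/2 = 2⁻¹ by norm_num, Real.log_inv] at h
    exact h
  have e : -(l/(2*π)) + (2/Real.sqrt 3/(2*π)) * (π/6*L - π/6)
        + (2/(2*π)) * (π/6*L - π/6) + -(l/(2*π))
      = -(l/π) + (L-1)/(6*Real.sqrt 3) + (L-1)/6 := by
    field_simp
    ring
  rw [e]
  have q1 : l/π ≤ 0.2206358 := by
    rw [div_le_iff₀ hπ]
    nlinarith
  have q2 : -0.163 ≤ (L-1)/(6*Real.sqrt 3) := by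
    rw [le_div_iff₀ (by positivity)]
    nlinarith
  have q3 : -0.2821912 ≤ (L-1)/6 := by linarith
  linarith

theorem stmt6 :
    ∀ y : ℝ, y ∈ Set.Ioo (-1 : ℝ) 1 →
      -Real.log 2 ≤
        ∫ θ in Set.Icc (-(Real.pi / 2)) (Real.pi / 2),
          min 0 (Real.log ‖Complex.exp (Real.pi / 6 * Complex.I) - Complex.exp (θ * Complex.I)‖) *
            ((1 - ‖(Complex.I * (y : ℂ))‖ ^ 2) / ‖Complex.exp (θ * Complex.I) - Complex.I * (y : ℂ)‖ ^ 2)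
            / (2 * Real.pi) := by
  intro y hy
  have hπ := Real.pi_pos
  show -Real.log 2 ≤ ∫ θ in Set.Icc (-(π/2)) (π/2), Fi y θ
  by_cases hint : MeasureTheory.IntegrableOn (Fi y) (Set.Icc (-(π/2)) (π/2)) volume
  swap
  · rw [MeasureTheory.integral_undef hint]
    have := Real.log_nonneg (by norm_num : (1:ℝ) ≤ 2)
    linarith
  · obtain ⟨itot, vtot⟩ := gAux_total
    have higAux : MeasureTheory.IntegrableOn gAux (Set.Icc (-(π/2)) (π/2)) volume := by
      rw [integrableOn_Icc_iff_integrableOn_Ioc]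
      exact (intervalIntegrable_iff_integrableOn_Ioc_of_le (by linarith)).1 itot
    have hmono := MeasureTheory.setIntegral_mono_on higAux hint measurableSet_Icc
      (fun x hx => gAux_le y x hy.1 hy.2 hx.1 hx.2)
    refine le_trans ?_ hmono
    have he : (∫ x in Set.Icc (-(π/2)) (π/2), gAux x) = ∫ x in (-(π/2))..(π/2), gAux x := by
      rw [intervalIntegral.integral_of_le (by linarith), MeasureTheory.integral_Icc_eq_integral_Ioc]
    rw [he, vtot]
    exact numeric_final
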